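/- Under the perturbation scheme with H ⪯ (1/(d(‖w‖² ∨ ε²))) I_d for ε ∈ (0,1): the loss estimate ℓ̃ = d H^{1/2} s ⟨w + H^{-1/2}s, ℓ⟩ satisfies ‖ℓ̃‖² ≤ 4 d² ‖ℓ‖² almost surely, and E[‖ℓ̃‖²] ≤ 2 d ‖ℓ‖². -/

import Mathlib

open Matrix Finset

/-- If the eigenvalues of `H` are at most `1/(d(‖w‖² ∨ ε²))` for `ε ∈ (0,1)`, then the
loss estimate `ℓ̃ = d H^{1/2} s ⟨w + H^{-1/2}s, ℓ⟩` satisfies `‖ℓ̃‖² ≤ 4 d² ‖ℓ‖²`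
almost surely and `E[‖ℓ̃‖²] ≤ 2 d ‖ℓ‖²`. -/
theorem stmt3 {d : ℕ} (hd : 0 < d)
    (H Hsqrt Hinvsqrt : Matrix (Fin d) (Fin d) ℝ)
    (v : Fin d → (Fin d → ℝ)) (lam : Fin d → ℝ) (ε : ℝ)
    (hε0 : 0 < ε) (hε1 : ε < 1)
    (hlam : ∀ i, 0 < lam i)
    (horth : ∀ i j, v i ⬝ᵥ v j = if i = j then (1 : ℝ) else 0)
    (hH : ∀ i, H.mulVec (v i) = lam i • v i)
    (hHsqrt : ∀ i, Hsqrt.mulVec (v i) = Real.sqrt (lam i) • v i)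
    (hHinvsqrt : ∀ i, Hinvsqrt.mulVec (v i) = (Real.sqrt (lam i))⁻¹ • v i)
    (w ℓ : Fin d → ℝ)
    (hlam_le : ∀ i, lam i ≤ 1 / ((d : ℝ) * max (w ⬝ᵥ w) (ε ^ 2)))
    (est : (Fin d → ℝ) → (Fin d → ℝ))
    (hest : ∀ s, est s = (((d : ℝ) * ((w + Hinvsqrt.mulVec s) ⬝ᵥ ℓ)) • Hsqrt.mulVec s)) :
    (∀ i, ∀ σ : ℝ, σ = 1 ∨ σ = -1 →
        est (σ • v i) ⬝ᵥ est (σ • v i) ≤ 4 * (d : ℝ) ^ 2 * (ℓ ⬝ᵥ ℓ)) ∧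
    (1 / (2 * (d : ℝ))) *
      (∑ i : Fin d, (est (v i) ⬝ᵥ est (v i) + est (-(v i)) ⬝ᵥ est (-(v i))))
      ≤ 2 * (d : ℝ) * (ℓ ⬝ᵥ ℓ) := by
  have hd1 : (1:ℝ) ≤ (d:ℝ) := by exact_mod_cast hd
  have hd0 : (0:ℝ) < (d:ℝ) := by positivity
  set c : ℝ := w ⬝ᵥ ℓ with hc
  set L : ℝ := ℓ ⬝ᵥ ℓ with hL
  have hLnn : 0 ≤ L := by
    simp only [hL, dotProduct]
    exact Finset.sum_nonneg fun i _ => mul_self_nonneg _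
  -- key algebraic identity
  have key : ∀ (i : Fin d) (σ : ℝ), σ = 1 ∨ σ = -1 →
      est (σ • v i) ⬝ᵥ est (σ • v i)
        = (d:ℝ)^2 * (c * Real.sqrt (lam i) + σ * (v i ⬝ᵥ ℓ))^2 := by
    intro i σ hσ
    have ht : 0 < Real.sqrt (lam i) := Real.sqrt_pos.mpr (hlam i)
    rw [hest]
    simp only [Matrix.mulVec_smul, hHsqrt, hHinvsqrt]
    simp only [smul_dotProduct, dotProduct_smul, add_dotProduct, smul_eq_mul, horth,
      if_pos rfl, ← hc]
    rcases hσ with h | h <;> subst h <;> field_simp <;> simp only [↓reduceIte, mul_one] <;> ring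
  -- Cauchy–Schwarz bounds
  have hM : 0 < max (w ⬝ᵥ w) (ε ^ 2) := lt_max_of_lt_right (by positivity)
  have hc2 : c^2 ≤ (w ⬝ᵥ w) * L := by
    simpa [hc, hL, dotProduct, sq] using
      Finset.sum_mul_sq_le_sq_mul_sq Finset.univ w ℓ
  have hb2 : ∀ i, (v i ⬝ᵥ ℓ)^2 ≤ L := by
    intro i
    have := Finset.sum_mul_sq_le_sq_mul_sq Finset.univ (v i) ℓ
    have hvv : v i ⬝ᵥ v i = 1 := by simpa using horth i i
    simp only [dotProduct, sq] at hvv ⊢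
    calc (∑ j, v i j * ℓ j) * (∑ j, v i j * ℓ j)
        ≤ (∑ j, v i j ^ 2) * ∑ j, ℓ j ^ 2 := by simpa [sq] using this
      _ = L := by simp only [hL, dotProduct, sq]; rw [hvv]; ring
  have hA : ∀ i, (d:ℝ) * (lam i * c^2) ≤ L := by
    intro i
    have h1 : lam i * ((d:ℝ) * max (w ⬝ᵥ w) (ε ^ 2)) ≤ 1 :=
      (le_div_iff₀ (by positivity)).mp (hlam_le i)
    have hcM : c^2 ≤ max (w ⬝ᵥ w) (ε ^ 2) * L := by
      calc c^2 ≤ (w ⬝ᵥ w) * L := hc2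
        _ ≤ max (w ⬝ᵥ w) (ε ^ 2) * L := by
            apply mul_le_mul_of_nonneg_right (le_max_left _ _) hLnn
    have h2 := mul_le_mul_of_nonneg_left hcM
      (mul_nonneg (hlam i).le hd0.le)
    have h3 := mul_le_mul_of_nonneg_right h1 hLnn
    nlinarith [hlam i]
  -- part 1
  have part1 : ∀ i, ∀ σ : ℝ, σ = 1 ∨ σ = -1 →
      est (σ • v i) ⬝ᵥ est (σ • v i) ≤ 4 * (d : ℝ) ^ 2 * L := by
    intro i σ hσ
    rw [key i σ hσ]
    have hσ2 : σ^2 = 1 := by rcases hσ with h | h <;> simp [h]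
    have ht2 : Real.sqrt (lam i) ^ 2 = lam i := Real.sq_sqrt (hlam i).le
    have hA2 : lam i * c^2 ≤ L := by nlinarith [hA i, hlam i, sq_nonneg c]
    have s1 : (c * Real.sqrt (lam i) + σ * (v i ⬝ᵥ ℓ))^2 ≤ 4 * L := by
      nlinarith [sq_nonneg (c * Real.sqrt (lam i) - σ * (v i ⬝ᵥ ℓ)), hb2 i]
    nlinarith [mul_le_mul_of_nonneg_left s1 (sq_nonneg (d:ℝ))]
  refine ⟨part1, ?_⟩
  -- Parseval
  have parseval : ∑ i : Fin d, (v i ⬝ᵥ ℓ)^2 = L := by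
    set V : Matrix (Fin d) (Fin d) ℝ := Matrix.of v with hV
    have hVVt : V * Vᵀ = 1 := by
      ext i j
      simp [Matrix.mul_apply, Matrix.one_apply, hV, ← horth i j, dotProduct]
    have hVtV : Vᵀ * V = 1 := mul_eq_one_comm.mp hVVt
    calc ∑ i : Fin d, (v i ⬝ᵥ ℓ)^2 = V.mulVec ℓ ⬝ᵥ V.mulVec ℓ := by
          simp [dotProduct, Matrix.mulVec, hV, sq]
      _ = L := by
          rw [Matrix.dotProduct_mulVec, ← Matrix.mulVec_transpose,
            Matrix.mulVec_mulVec, hVtV, Matrix.one_mulVec]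
  -- per-index identity for the sum
  have hsum_eq : ∑ i : Fin d, (est (v i) ⬝ᵥ est (v i) + est (-(v i)) ⬝ᵥ est (-(v i)))
      = ∑ i : Fin d, (2*(d:ℝ)^2*(lam i * c^2) + 2*(d:ℝ)^2*(v i ⬝ᵥ ℓ)^2) := by
    refine Finset.sum_congr rfl fun i _ => ?_
    have e1 := key i 1 (Or.inl rfl)
    rw [one_smul] at e1
    have e2 := key i (-1) (Or.inr rfl)
    rw [neg_one_smul] at e2
    have ht2 : Real.sqrt (lam i) ^ 2 = lam i := Real.sq_sqrt (hlam i).le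
    rw [e1, e2]
    linear_combination (2*(d:ℝ)^2*c^2) * ht2
  rw [hsum_eq]
  have hsum_le : ∑ i : Fin d, (2*(d:ℝ)^2*(lam i * c^2) + 2*(d:ℝ)^2*(v i ⬝ᵥ ℓ)^2)
      ≤ 4*(d:ℝ)^2*L := by
    rw [Finset.sum_add_distrib, ← Finset.mul_sum, ← Finset.mul_sum, parseval]
    have hS : ∑ i : Fin d, lam i * c^2 ≤ L := by
      calc ∑ i : Fin d, lam i * c^2 ≤ ∑ _i : Fin d, L / (d:ℝ) := by
            refine Finset.sum_le_sum fun i _ => ?_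
            rw [le_div_iff₀ hd0]
            nlinarith [hA i]
        _ = L := by
            rw [Finset.sum_const, Finset.card_univ, Fintype.card_fin, nsmul_eq_mul]
            field_simp
      
    nlinarith [hLnn]
  calc (1 / (2 * (d:ℝ))) * ∑ i : Fin d, (2*(d:ℝ)^2*(lam i * c^2) + 2*(d:ℝ)^2*(v i ⬝ᵥ ℓ)^2)
      ≤ (1 / (2 * (d:ℝ))) * (4*(d:ℝ)^2*L) := by
        apply mul_le_mul_of_nonneg_left hsum_le (by positivity)
    _ = 2 * (d:ℝ) * L := by field_simp; ring
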